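/- Let H be a separable Hilbert space and A a self-adjoint operator with compact resolvent, with eigenvalues (μ_n) arranged nondecreasingly tending to +∞ and A ≥ c·Id for some c > -1. Let (ρ_m) be a sequence of states (nonnegative, trace class, trace one) with Tr(A^{1/2} ρ_m A^{1/2}) ≤ C uniformly, converging weak-* in trace class to a trace-class operator ρ and such that A^{1/2} ρ_m A^{1/2} converges weak-* in trace class. Then Tr(ρ_m) → Tr(ρ), hence ρ is a state and ρ_m → ρ in trace norm. -/

import Mathlib

open Filter Topology
open scoped InnerProductSpace ENNReal

/-- The trace norm of a bounded operator, characterized as the supremum over pairs of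
finite orthonormal families `(e_i)`, `(f_i)` of `∑ |⟨e_i, T f_i⟩|`. -/
noncomputable def traceNorm {H : Type*} [NormedAddCommGroup H]
    [InnerProductSpace ℂ H] (T : H →L[ℂ] H) : ℝ≥0∞ :=
  ⨆ (n : ℕ) (e : Fin n → H) (f : Fin n → H) (_ : Orthonormal ℂ e)
    (_ : Orthonormal ℂ f), ∑ i, (‖⟪e i, T (f i)⟫_ℂ‖₊ : ℝ≥0∞)

set_option linter.unusedSectionVars false
set_option synthInstance.maxHeartbeats 1000000
set_option maxHeartbeats 1000000


namespace Stmt8Aux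

variable {H : Type*} [NormedAddCommGroup H] [InnerProductSpace ℂ H] [CompleteSpace H]

lemma re_conj_mul (z : ℂ) : ((starRingEnd ℂ) z * z).re = ‖z‖ ^ 2 := by
  rw [mul_comm, Complex.mul_conj]
  simp only [Complex.ofReal_re, Complex.normSq_eq_norm_sq]

lemma re_inner_self (x : H) : (⟪x, x⟫_ℂ).re = ‖x‖ ^ 2 := by
  simpa using @inner_self_eq_norm_sq ℂ _ _ _ _ x

lemma re_inner_symm (x y : H) : (⟪x, y⟫_ℂ).re = (⟪y, x⟫_ℂ).re := by
  rw [← inner_conj_symm x y]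
  exact Complex.conj_re _

/-- Parseval: sum of squared coefficients. -/
lemma hasSum_inner_sq (b : HilbertBasis ℕ ℂ H) (x : H) :
    HasSum (fun j => ‖⟪b j, x⟫_ℂ‖ ^ 2) (‖x‖ ^ 2) := by
  have h := (b.hasSum_inner_mul_inner x x).mapL Complex.reCLM
  have h1 : ∀ j : ℕ, Complex.reCLM (⟪x, b j⟫_ℂ * ⟪b j, x⟫_ℂ) = ‖⟪b j, x⟫_ℂ‖ ^ 2 := by
    intro j
    have : ⟪x, b j⟫_ℂ = (starRingEnd ℂ) ⟪b j, x⟫_ℂ := (inner_conj_symm x (b j)).symm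
    rw [this]
    exact re_conj_mul _
  have h2 : Complex.reCLM ⟪x, x⟫_ℂ = ‖x‖ ^ 2 := re_inner_self x
  simpa only [h1, h2] using h

/-- Truncation to the span of the first `N` basis vectors. -/
noncomputable def trP (b : HilbertBasis ℕ ℂ H) (N : ℕ) (x : H) : H :=
  ∑ j ∈ Finset.range N, ⟪b j, x⟫_ℂ • b j

lemma inner_basis_trP (b : HilbertBasis ℕ ℂ H) (N : ℕ) (x : H) {j : ℕ}
    (hj : j ∈ Finset.range N) : ⟪b j, trP b N x⟫_ℂ = ⟪b j, x⟫_ℂ := by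
  have hb := orthonormal_iff_ite.mp b.orthonormal
  simp only [trP, inner_sum, inner_smul_right]
  rw [Finset.sum_eq_single j]
  · simp [hb, b.orthonormal.1 j]
  · intro k _ hkj; rw [hb]; simp [Ne.symm hkj]
  · intro h; exact absurd hj h

lemma inner_trP_left (b : HilbertBasis ℕ ℂ H) (N : ℕ) (x y : H) :
    ⟪trP b N x, y⟫_ℂ = ∑ j ∈ Finset.range N, (starRingEnd ℂ) ⟪b j, x⟫_ℂ * ⟪b j, y⟫_ℂ := by
  simp [trP, sum_inner, inner_smul_left]
  exact Finset.sum_congr rfl fun _ _ => mul_comm _ _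

lemma trP_symm (b : HilbertBasis ℕ ℂ H) (N : ℕ) (x y : H) :
    ⟪trP b N x, y⟫_ℂ = ⟪x, trP b N y⟫_ℂ := by
  rw [inner_trP_left]
  simp only [trP, inner_sum, inner_smul_right]
  refine Finset.sum_congr rfl fun j _ => ?_
  rw [inner_conj_symm, mul_comm]

lemma norm_trP_sq (b : HilbertBasis ℕ ℂ H) (N : ℕ) (x : H) :
    ‖trP b N x‖ ^ 2 = ∑ j ∈ Finset.range N, ‖⟪b j, x⟫_ℂ‖ ^ 2 := by
  rw [← re_inner_self, inner_trP_left, Complex.re_sum]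
  refine Finset.sum_congr rfl fun j hj => ?_
  rw [inner_basis_trP b N x hj]
  exact re_conj_mul _

lemma inner_trP_self (b : HilbertBasis ℕ ℂ H) (N : ℕ) (x : H) :
    ⟪trP b N x, trP b N x⟫_ℂ = ⟪trP b N x, x⟫_ℂ := by
  rw [inner_trP_left, inner_trP_left]
  refine Finset.sum_congr rfl fun j hj => ?_
  rw [inner_basis_trP b N x hj]

lemma norm_sub_trP_sq (b : HilbertBasis ℕ ℂ H) (N : ℕ) (x : H) :
    ‖x - trP b N x‖ ^ 2 = ‖x‖ ^ 2 - ∑ j ∈ Finset.range N, ‖⟪b j, x⟫_ℂ‖ ^ 2 := by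
  have e1 : ⟪x - trP b N x, x - trP b N x⟫_ℂ
      = ⟪x, x⟫_ℂ - ⟪trP b N x, x⟫_ℂ - ⟪x, trP b N x⟫_ℂ + ⟪trP b N x, trP b N x⟫_ℂ := by
    simp only [inner_sub_left, inner_sub_right]; ring
  have e3 : (⟪trP b N x, x⟫_ℂ).re = ‖trP b N x‖ ^ 2 := by
    rw [← inner_trP_self, re_inner_self]
  calc ‖x - trP b N x‖ ^ 2 = (⟪x - trP b N x, x - trP b N x⟫_ℂ).re := (re_inner_self _).symm
    _ = (⟪x, x⟫_ℂ).re - (⟪trP b N x, x⟫_ℂ).re - (⟪x, trP b N x⟫_ℂ).re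
        + (⟪trP b N x, trP b N x⟫_ℂ).re := by rw [e1]; simp
    _ = ‖x‖ ^ 2 - ∑ j ∈ Finset.range N, ‖⟪b j, x⟫_ℂ‖ ^ 2 := by
        rw [re_inner_symm x (trP b N x), e3, re_inner_self, re_inner_self, norm_trP_sq]
        ring

/-- Tail formula for the complement. -/
lemma norm_sub_trP_sq_eq_tsum (b : HilbertBasis ℕ ℂ H) (N : ℕ) (x : H) :
    ‖x - trP b N x‖ ^ 2
      = ∑' (k : ↑((↑(Finset.range N) : Set ℕ)ᶜ)), ‖⟪b (k : ℕ), x⟫_ℂ‖ ^ 2 := by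
  have hs := (hasSum_inner_sq b x).summable
  have h := Summable.sum_add_tsum_compl (s := Finset.range N) hs
  rw [(hasSum_inner_sq b x).tsum_eq] at h
  rw [norm_sub_trP_sq, ← h]
  ring


lemma sum_sq_apply_le (b : HilbertBasis ℕ ℂ H) (s : H →L[ℂ] H)
    (hsym : ∀ x y : H, ⟪s x, y⟫_ℂ = ⟪x, s y⟫_ℂ)
    (hd : Summable fun j => ‖s (b j)‖ ^ 2) {n : ℕ} (w : Fin n → H)
    (hw : ∀ x : H, ∑ i, ‖⟪x, w i⟫_ℂ‖ ^ 2 ≤ ‖x‖ ^ 2) :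
    ∑ i, ‖s (w i)‖ ^ 2 ≤ ∑' j, ‖s (b j)‖ ^ 2 := by
  have key : ∀ i : Fin n, HasSum (fun j => ‖⟪b j, s (w i)⟫_ℂ‖ ^ 2) (‖s (w i)‖ ^ 2) :=
    fun i => hasSum_inner_sq b _
  have hbd : ∀ j : ℕ, ∑ i, ‖⟪b j, s (w i)⟫_ℂ‖ ^ 2 ≤ ‖s (b j)‖ ^ 2 := by
    intro j
    have h1 : ∀ i : Fin n, ‖⟪b j, s (w i)⟫_ℂ‖ ^ 2 = ‖⟪s (b j), w i⟫_ℂ‖ ^ 2 := fun i => by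
      rw [hsym]
    rw [Finset.sum_congr rfl fun i _ => h1 i]
    exact hw (s (b j))
  calc ∑ i, ‖s (w i)‖ ^ 2 = ∑ i, ∑' j, ‖⟪b j, s (w i)⟫_ℂ‖ ^ 2 :=
        Finset.sum_congr rfl fun i _ => ((key i).tsum_eq).symm
    _ = ∑' j, ∑ i, ‖⟪b j, s (w i)⟫_ℂ‖ ^ 2 :=
        (Summable.tsum_finsetSum fun i _ => (key i).summable).symm
    _ ≤ ∑' j, ‖s (b j)‖ ^ 2 := by
        refine Summable.tsum_le_tsum hbd ?_ hd
        exact Summable.of_nonneg_of_le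
          (fun j => Finset.sum_nonneg fun i _ => sq_nonneg _) hbd hd

lemma sum_sq_apply_tail_le (b : HilbertBasis ℕ ℂ H) (s : H →L[ℂ] H)
    (hsym : ∀ x y : H, ⟪s x, y⟫_ℂ = ⟪x, s y⟫_ℂ)
    (hd : Summable fun j => ‖s (b j)‖ ^ 2) {n : ℕ} (w : Fin n → H) (hw : Orthonormal ℂ w)
    (N : ℕ) :
    ∑ i, ‖s (w i - trP b N (w i))‖ ^ 2
      ≤ ∑' (k : ↑((↑(Finset.range N) : Set ℕ)ᶜ)), ‖s (b (k : ℕ))‖ ^ 2 := by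
  have hstep : ∀ (i : Fin n) (j : ℕ),
      ⟪b j, s (w i - trP b N (w i))⟫_ℂ = ⟪s (b j) - trP b N (s (b j)), w i⟫_ℂ := by
    intro i j
    rw [← hsym, inner_sub_right, inner_sub_left, ← trP_symm]
  have hQle : ∀ x : H, ‖x - trP b N x‖ ^ 2 ≤ ‖x‖ ^ 2 := by
    intro x
    rw [norm_sub_trP_sq]
    have h := Finset.sum_nonneg (s := Finset.range N)
      (f := fun j => ‖⟪b j, x⟫_ℂ‖ ^ 2) (fun j _ => sq_nonneg _)
    linarith
  have hQsummable : Summable fun j => ‖s (b j) - trP b N (s (b j))‖ ^ 2 :=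
    Summable.of_nonneg_of_le (fun j => sq_nonneg _) (fun j => hQle _) hd
  have key : ∀ i : Fin n, HasSum (fun j => ‖⟪b j, s (w i - trP b N (w i))⟫_ℂ‖ ^ 2)
      (‖s (w i - trP b N (w i))‖ ^ 2) := fun i => hasSum_inner_sq b _
  have hbd : ∀ j : ℕ, ∑ i, ‖⟪b j, s (w i - trP b N (w i))⟫_ℂ‖ ^ 2
      ≤ ‖s (b j) - trP b N (s (b j))‖ ^ 2 := by
    intro j
    have h1 : ∀ i : Fin n, ‖⟪b j, s (w i - trP b N (w i))⟫_ℂ‖ ^ 2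
        = ‖⟪w i, s (b j) - trP b N (s (b j))⟫_ℂ‖ ^ 2 := by
      intro i; rw [hstep i j, ← norm_inner_symm]
    rw [Finset.sum_congr rfl fun i _ => h1 i]
    exact Orthonormal.sum_inner_products_le (x := s (b j) - trP b N (s (b j))) hw
  have first : ∑ i, ‖s (w i - trP b N (w i))‖ ^ 2
      ≤ ∑' j, ‖s (b j) - trP b N (s (b j))‖ ^ 2 := by
    calc ∑ i, ‖s (w i - trP b N (w i))‖ ^ 2
        = ∑ i, ∑' j, ‖⟪b j, s (w i - trP b N (w i))⟫_ℂ‖ ^ 2 :=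
          Finset.sum_congr rfl fun i _ => ((key i).tsum_eq).symm
      _ = ∑' j, ∑ i, ‖⟪b j, s (w i - trP b N (w i))⟫_ℂ‖ ^ 2 :=
          (Summable.tsum_finsetSum fun i _ => (key i).summable).symm
      _ ≤ ∑' j, ‖s (b j) - trP b N (s (b j))‖ ^ 2 := by
          refine Summable.tsum_le_tsum hbd ?_ hQsummable
          exact Summable.of_nonneg_of_le
            (fun j => Finset.sum_nonneg fun i _ => sq_nonneg _) hbd hQsummable
  have hFs : ∀ j : ℕ, ‖s (b j) - trP b N (s (b j))‖ ^ 2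
      = ∑' (k : ↑((↑(Finset.range N) : Set ℕ)ᶜ)), ‖⟪b (k : ℕ), s (b j)⟫_ℂ‖ ^ 2 :=
    fun j => norm_sub_trP_sq_eq_tsum b N _
  have hunc : Summable (Function.uncurry
      fun (j : ℕ) (k : ↑((↑(Finset.range N) : Set ℕ)ᶜ)) => ‖⟪b (k : ℕ), s (b j)⟫_ℂ‖ ^ 2) := by
    apply (summable_prod_of_nonneg (fun p => sq_nonneg _)).mpr
    refine ⟨fun j => ((hasSum_inner_sq b (s (b j))).summable).subtype _, ?_⟩
    apply Summable.of_nonneg_of_le (fun j => tsum_nonneg fun k => sq_nonneg _) _ hd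
    intro j
    rw [← hFs j]
    exact hQle _
  have hswap : ∑' j, ∑' (k : ↑((↑(Finset.range N) : Set ℕ)ᶜ)), ‖⟪b (k : ℕ), s (b j)⟫_ℂ‖ ^ 2
      = ∑' (k : ↑((↑(Finset.range N) : Set ℕ)ᶜ)), ∑' j, ‖⟪b (k : ℕ), s (b j)⟫_ℂ‖ ^ 2 :=
    Summable.tsum_comm hunc.prod_symm
  have hinner : ∀ k : ↑((↑(Finset.range N) : Set ℕ)ᶜ),
      ∑' j, ‖⟪b (k : ℕ), s (b j)⟫_ℂ‖ ^ 2 = ‖s (b (k : ℕ))‖ ^ 2 := by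
    intro k
    have h1 : ∀ j : ℕ, ‖⟪b (k : ℕ), s (b j)⟫_ℂ‖ ^ 2 = ‖⟪b j, s (b (k : ℕ))⟫_ℂ‖ ^ 2 := by
      intro j; rw [← hsym, norm_inner_symm]
    rw [tsum_congr h1]
    exact (hasSum_inner_sq b _).tsum_eq
  calc ∑ i, ‖s (w i - trP b N (w i))‖ ^ 2
      ≤ ∑' j, ‖s (b j) - trP b N (s (b j))‖ ^ 2 := first
    _ = ∑' j, ∑' (k : ↑((↑(Finset.range N) : Set ℕ)ᶜ)), ‖⟪b (k : ℕ), s (b j)⟫_ℂ‖ ^ 2 :=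
        tsum_congr hFs
    _ = ∑' (k : ↑((↑(Finset.range N) : Set ℕ)ᶜ)), ∑' j, ‖⟪b (k : ℕ), s (b j)⟫_ℂ‖ ^ 2 := hswap
    _ = ∑' (k : ↑((↑(Finset.range N) : Set ℕ)ᶜ)), ‖s (b (k : ℕ))‖ ^ 2 := tsum_congr hinner


lemma exists_sqrt (T : H →L[ℂ] H) (hT : T.IsPositive) :
    ∃ s : H →L[ℂ] H, (∀ x y : H, ⟪s x, y⟫_ℂ = ⟪x, s y⟫_ℂ) ∧
      (∀ x y : H, ⟪x, T y⟫_ℂ = ⟪s x, s y⟫_ℂ) ∧ (∀ x : H, ‖s x‖ ^ 2 = (⟪x, T x⟫_ℂ).re) := by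
  have h0 : (0 : H →L[ℂ] H) ≤ T := (ContinuousLinearMap.nonneg_iff_isPositive T).mpr hT
  set s := CFC.sqrt T with hsdef
  have hspos : s.IsPositive := (ContinuousLinearMap.nonneg_iff_isPositive s).mp (CFC.sqrt_nonneg T)
  have hsym : ∀ x y : H, ⟪s x, y⟫_ℂ = ⟪x, s y⟫_ℂ := fun x y =>
    (ContinuousLinearMap.isSelfAdjoint_iff_isSymmetric.mp hspos.isSelfAdjoint) x y
  have hmul : s * s = T := CFC.sqrt_mul_sqrt_self T h0
  have hip : ∀ x y : H, ⟪x, T y⟫_ℂ = ⟪s x, s y⟫_ℂ := by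
    intro x y
    rw [← hmul, hsym]
    rfl
  refine ⟨s, hsym, hip, fun x => ?_⟩
  rw [← re_inner_self (s x), hip]

lemma core_estimate (b : HilbertBasis ℕ ℂ H) (T : H →L[ℂ] H) (hT : T.IsPositive)
    (hd : Summable fun j => (⟪b j, T (b j)⟫_ℂ).re) (N : ℕ) {n : ℕ}
    (e f : Fin n → H) (he : Orthonormal ℂ e) (hf : Orthonormal ℂ f) :
    ∑ i, ‖⟪e i, T (f i)⟫_ℂ - ⟪trP b N (e i), T (trP b N (f i))⟫_ℂ‖
      ≤ 2 * Real.sqrt (∑' j, (⟪b j, T (b j)⟫_ℂ).re) *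
        Real.sqrt (∑' (k : ↑((↑(Finset.range N) : Set ℕ)ᶜ)),
          (⟪b (k : ℕ), T (b (k : ℕ))⟫_ℂ).re) := by
  obtain ⟨s, hsym, hip, hnorm⟩ := exists_sqrt T hT
  have hdrw : ∀ j : ℕ, (⟪b j, T (b j)⟫_ℂ).re = ‖s (b j)‖ ^ 2 := fun j => (hnorm _).symm
  have hd' : Summable fun j => ‖s (b j)‖ ^ 2 := by
    have : (fun j => ‖s (b j)‖ ^ 2) = fun j => (⟪b j, T (b j)⟫_ℂ).re :=
      funext fun j => (hdrw j).symm
    rw [this]; exact hd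
  have hBessel : ∀ {m : ℕ} (v : Fin m → H), Orthonormal ℂ v →
      ∀ x : H, ∑ i, ‖⟪x, v i⟫_ℂ‖ ^ 2 ≤ ‖x‖ ^ 2 := by
    intro m v hv x
    have h1 : ∀ i : Fin m, ‖⟪x, v i⟫_ℂ‖ ^ 2 = ‖⟪v i, x⟫_ℂ‖ ^ 2 := fun i => by
      rw [norm_inner_symm]
    rw [Finset.sum_congr rfl fun i _ => h1 i]
    exact Orthonormal.sum_inner_products_le (x := x) hv
  have hBesselP : ∀ {m : ℕ} (v : Fin m → H), Orthonormal ℂ v →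
      ∀ x : H, ∑ i, ‖⟪x, trP b N (v i)⟫_ℂ‖ ^ 2 ≤ ‖x‖ ^ 2 := by
    intro m v hv x
    have h1 : ∀ i : Fin m, ‖⟪x, trP b N (v i)⟫_ℂ‖ ^ 2 = ‖⟪trP b N x, v i⟫_ℂ‖ ^ 2 := fun i => by
      rw [trP_symm]
    rw [Finset.sum_congr rfl fun i _ => h1 i]
    refine le_trans (hBessel v hv (trP b N x)) ?_
    rw [norm_trP_sq]
    exact sum_le_hasSum _ (fun j _ => sq_nonneg _) (hasSum_inner_sq b x)
  set S := ∑' j, ‖s (b j)‖ ^ 2 with hS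
  set τ := ∑' (k : ↑((↑(Finset.range N) : Set ℕ)ᶜ)), ‖s (b (k : ℕ))‖ ^ 2 with hτ
  have hrw1 : (∑' j, (⟪b j, T (b j)⟫_ℂ).re) = S := tsum_congr hdrw
  have hrw2 : (∑' (k : ↑((↑(Finset.range N) : Set ℕ)ᶜ)), (⟪b (k : ℕ), T (b (k : ℕ))⟫_ℂ).re) = τ :=
    tsum_congr fun k => hdrw _
  rw [hrw1, hrw2]
  have hpt : ∀ i : Fin n, ‖⟪e i, T (f i)⟫_ℂ - ⟪trP b N (e i), T (trP b N (f i))⟫_ℂ‖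
      ≤ ‖s (e i - trP b N (e i))‖ * ‖s (f i)‖
        + ‖s (trP b N (e i))‖ * ‖s (f i - trP b N (f i))‖ := by
    intro i
    have hdecomp : ⟪e i, T (f i)⟫_ℂ - ⟪trP b N (e i), T (trP b N (f i))⟫_ℂ
        = ⟪e i - trP b N (e i), T (f i)⟫_ℂ + ⟪trP b N (e i), T (f i - trP b N (f i))⟫_ℂ := by
      rw [inner_sub_left, map_sub, inner_sub_right]
      ring
    rw [hdecomp]
    refine le_trans (norm_add_le _ _) (add_le_add ?_ ?_)
    · rw [hip]; exact norm_inner_le_norm _ _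
    · rw [hip]; exact norm_inner_le_norm _ _
  refine le_trans (Finset.sum_le_sum fun i _ => hpt i) ?_
  rw [Finset.sum_add_distrib]
  have hCS1 := Real.sum_mul_le_sqrt_mul_sqrt Finset.univ
    (fun i : Fin n => ‖s (e i - trP b N (e i))‖) (fun i => ‖s (f i)‖)
  have hCS2 := Real.sum_mul_le_sqrt_mul_sqrt Finset.univ
    (fun i : Fin n => ‖s (trP b N (e i))‖) (fun i => ‖s (f i - trP b N (f i))‖)
  have m2e := sum_sq_apply_tail_le b s hsym hd' e he N
  have m2f := sum_sq_apply_tail_le b s hsym hd' f hf N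
  have m1f := sum_sq_apply_le b s hsym hd' f (hBessel f hf)
  have m1pe := sum_sq_apply_le b s hsym hd' (fun i => trP b N (e i)) (hBesselP e he)
  have h1 : Real.sqrt (∑ i, ‖s (e i - trP b N (e i))‖ ^ 2) ≤ Real.sqrt τ :=
    Real.sqrt_le_sqrt m2e
  have h2 : Real.sqrt (∑ i, ‖s (f i)‖ ^ 2) ≤ Real.sqrt S := Real.sqrt_le_sqrt m1f
  have h3 : Real.sqrt (∑ i, ‖s (trP b N (e i))‖ ^ 2) ≤ Real.sqrt S := Real.sqrt_le_sqrt m1pe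
  have h4 : Real.sqrt (∑ i, ‖s (f i - trP b N (f i))‖ ^ 2) ≤ Real.sqrt τ :=
    Real.sqrt_le_sqrt m2f
  have hb1 : ∑ i, ‖s (e i - trP b N (e i))‖ * ‖s (f i)‖ ≤ Real.sqrt τ * Real.sqrt S :=
    le_trans hCS1 (mul_le_mul h1 h2 (Real.sqrt_nonneg _) (Real.sqrt_nonneg _))
  have hb2 : ∑ i, ‖s (trP b N (e i))‖ * ‖s (f i - trP b N (f i))‖
      ≤ Real.sqrt S * Real.sqrt τ :=
    le_trans hCS2 (mul_le_mul h3 h4 (Real.sqrt_nonneg _) (Real.sqrt_nonneg _))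
  calc ∑ i, ‖s (e i - trP b N (e i))‖ * ‖s (f i)‖
        + ∑ i, ‖s (trP b N (e i))‖ * ‖s (f i - trP b N (f i))‖
      ≤ Real.sqrt τ * Real.sqrt S + Real.sqrt S * Real.sqrt τ := add_le_add hb1 hb2
    _ = 2 * Real.sqrt S * Real.sqrt τ := by ring

lemma block_estimate (b : HilbertBasis ℕ ℂ H) (X : H →L[ℂ] H) (N : ℕ) {n : ℕ}
    (e f : Fin n → H) (he : Orthonormal ℂ e) (hf : Orthonormal ℂ f) :
    ∑ i, ‖⟪trP b N (e i), X (trP b N (f i))⟫_ℂ‖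
      ≤ ∑ j ∈ Finset.range N, ∑ k ∈ Finset.range N, ‖⟪b j, X (b k)⟫_ℂ‖ := by
  have hexp : ∀ i : Fin n, ⟪trP b N (e i), X (trP b N (f i))⟫_ℂ
      = ∑ j ∈ Finset.range N, ∑ k ∈ Finset.range N,
          (starRingEnd ℂ) ⟪b j, e i⟫_ℂ * (⟪b k, f i⟫_ℂ * ⟪b j, X (b k)⟫_ℂ) := by
    intro i
    rw [inner_trP_left]
    refine Finset.sum_congr rfl fun j hj => ?_
    have : ⟪b j, X (trP b N (f i))⟫_ℂ
        = ∑ k ∈ Finset.range N, ⟪b k, f i⟫_ℂ * ⟪b j, X (b k)⟫_ℂ := by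
      rw [trP, map_sum, inner_sum]
      refine Finset.sum_congr rfl fun k hk => ?_
      rw [map_smul, inner_smul_right]
    rw [this, Finset.mul_sum]
  have hpt : ∀ i : Fin n, ‖⟪trP b N (e i), X (trP b N (f i))⟫_ℂ‖
      ≤ ∑ j ∈ Finset.range N, ∑ k ∈ Finset.range N,
          ‖⟪b j, e i⟫_ℂ‖ * (‖⟪b k, f i⟫_ℂ‖ * ‖⟪b j, X (b k)⟫_ℂ‖) := by
    intro i
    rw [hexp i]
    refine le_trans (norm_sum_le _ _) (Finset.sum_le_sum fun j _ => ?_)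
    refine le_trans (norm_sum_le _ _) (Finset.sum_le_sum fun k _ => ?_)
    rw [norm_mul, norm_mul, RCLike.norm_conj]
  refine le_trans (Finset.sum_le_sum fun i _ => hpt i) ?_
  rw [Finset.sum_comm]
  refine Finset.sum_le_sum fun j _ => ?_
  rw [Finset.sum_comm]
  refine Finset.sum_le_sum fun k _ => ?_
  have hfac : ∑ i : Fin n, ‖⟪b j, e i⟫_ℂ‖ * (‖⟪b k, f i⟫_ℂ‖ * ‖⟪b j, X (b k)⟫_ℂ‖)
      = (∑ i : Fin n, ‖⟪b j, e i⟫_ℂ‖ * ‖⟪b k, f i⟫_ℂ‖) * ‖⟪b j, X (b k)⟫_ℂ‖ := by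
    rw [Finset.sum_mul]
    exact Finset.sum_congr rfl fun i _ => by ring
  rw [hfac]
  have hcs := Real.sum_mul_le_sqrt_mul_sqrt Finset.univ
    (fun i : Fin n => ‖⟪b j, e i⟫_ℂ‖) (fun i => ‖⟪b k, f i⟫_ℂ‖)
  have hbe : ∑ i : Fin n, ‖⟪b j, e i⟫_ℂ‖ ^ 2 ≤ 1 := by
    have h1 : ∀ i : Fin n, ‖⟪b j, e i⟫_ℂ‖ ^ 2 = ‖⟪e i, b j⟫_ℂ‖ ^ 2 := fun i => by
      rw [norm_inner_symm]
    rw [Finset.sum_congr rfl fun i _ => h1 i]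
    have := Orthonormal.sum_inner_products_le (x := b j) (s := Finset.univ) he
    rwa [b.orthonormal.1 j, one_pow] at this
  have hbf : ∑ i : Fin n, ‖⟪b k, f i⟫_ℂ‖ ^ 2 ≤ 1 := by
    have h1 : ∀ i : Fin n, ‖⟪b k, f i⟫_ℂ‖ ^ 2 = ‖⟪f i, b k⟫_ℂ‖ ^ 2 := fun i => by
      rw [norm_inner_symm]
    rw [Finset.sum_congr rfl fun i _ => h1 i]
    have := Orthonormal.sum_inner_products_le (x := b k) (s := Finset.univ) hf
    rwa [b.orthonormal.1 k, one_pow] at this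
  have hsum1 : ∑ i : Fin n, ‖⟪b j, e i⟫_ℂ‖ * ‖⟪b k, f i⟫_ℂ‖ ≤ 1 := by
    refine le_trans hcs ?_
    calc Real.sqrt (∑ i : Fin n, ‖⟪b j, e i⟫_ℂ‖ ^ 2)
          * Real.sqrt (∑ i : Fin n, ‖⟪b k, f i⟫_ℂ‖ ^ 2)
        ≤ 1 * 1 := by
          refine mul_le_mul ?_ ?_ (Real.sqrt_nonneg _) zero_le_one
          · rw [show (1 : ℝ) = Real.sqrt 1 from (Real.sqrt_one).symm]
            exact Real.sqrt_le_sqrt hbe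
          · rw [show (1 : ℝ) = Real.sqrt 1 from (Real.sqrt_one).symm]
            exact Real.sqrt_le_sqrt hbf
      _ = 1 := one_mul 1
  calc (∑ i : Fin n, ‖⟪b j, e i⟫_ℂ‖ * ‖⟪b k, f i⟫_ℂ‖) * ‖⟪b j, X (b k)⟫_ℂ‖
      ≤ 1 * ‖⟪b j, X (b k)⟫_ℂ‖ := by
        exact mul_le_mul_of_nonneg_right hsum1 (norm_nonneg _)
    _ = ‖⟪b j, X (b k)⟫_ℂ‖ := one_mul _

noncomputable def rk (u v : H) : H →L[ℂ] H := (innerSL ℂ u).smulRight v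

lemma rk_apply (u v x : H) : rk u v x = ⟪u, x⟫_ℂ • v := rfl

lemma rk_isCompact (u v : H) : IsCompactOperator (rk u v) := by
  rw [isCompactOperator_iff_exists_mem_nhds_image_subset_compact]
  refine ⟨Metric.closedBall 0 1, Metric.closedBall_mem_nhds 0 one_pos,
    (fun c : ℂ => c • v) '' Metric.closedBall 0 ‖u‖, ?_, ?_⟩
  · exact (isCompact_closedBall 0 ‖u‖).image (continuous_id.smul continuous_const)
  · rintro y ⟨x, hx, rfl⟩
    refine ⟨⟪u, x⟫_ℂ, ?_, rfl⟩
    rw [Metric.mem_closedBall, dist_zero_right]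
    have hx1 : ‖x‖ ≤ 1 := by
      rw [Metric.mem_closedBall, dist_zero_right] at hx; exact hx
    calc ‖⟪u, x⟫_ℂ‖ ≤ ‖u‖ * ‖x‖ := norm_inner_le_norm _ _
      _ ≤ ‖u‖ * 1 := mul_le_mul_of_nonneg_left hx1 (norm_nonneg _)
      _ = ‖u‖ := mul_one _

lemma trace_rk (b : HilbertBasis ℕ ℂ H) (A : H →L[ℂ] H) (u v : H) :
    ∑' i, ⟪b i, (A ∘L rk u v) (b i)⟫_ℂ = ⟪u, A v⟫_ℂ := by
  have h : ∀ i : ℕ, ⟪b i, (A ∘L rk u v) (b i)⟫_ℂ = ⟪u, b i⟫_ℂ * ⟪b i, A v⟫_ℂ := by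
    intro i
    rw [ContinuousLinearMap.comp_apply, rk_apply, map_smul, inner_smul_right]
  rw [tsum_congr h]
  exact b.tsum_inner_mul_inner u (A v)


lemma tail_bound {d : ℕ → ℝ} {μ : ℕ → ℝ} {c C : ℝ} (hc : -1 < c) (hμc : ∀ n, c ≤ μ n)
    (hμmono : Monotone μ) (hd0 : ∀ i, 0 ≤ d i) (hd1 : HasSum d 1)
    (hEs : Summable fun i => μ i * d i) (hEbd : ∑' i, μ i * d i ≤ C) (N : ℕ) :
    ∑' (k : ↑((↑(Finset.range N) : Set ℕ)ᶜ)), d (k : ℕ) ≤ (C + 1) / (μ N + 1) := by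
  have hμN : 0 < μ N + 1 := by have := hμc N; linarith
  have hg : Summable (fun i => (μ i + 1) * d i) := by
    have h : (fun i => (μ i + 1) * d i) = fun i => μ i * d i + d i := funext fun i => by ring
    rw [h]; exact hEs.add hd1.summable
  have hgsum : ∑' i, (μ i + 1) * d i ≤ C + 1 := by
    have h : ∑' i, (μ i + 1) * d i = (∑' i, μ i * d i) + ∑' i, d i := by
      rw [← Summable.tsum_add hEs hd1.summable]
      exact tsum_congr fun i => by ring
    rw [h, hd1.tsum_eq]
    linarith
  have hsub : ∀ k : ↑((↑(Finset.range N) : Set ℕ)ᶜ),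
      (μ N + 1) * d (k : ℕ) ≤ (μ (k : ℕ) + 1) * d (k : ℕ) := by
    intro k
    have hk : N ≤ (k : ℕ) := by
      have h2 := k.2
      simp only [Set.mem_compl_iff, Finset.coe_range, Set.mem_Iio, not_lt] at h2
      exact h2
    exact mul_le_mul_of_nonneg_right (by have := hμmono hk; linarith) (hd0 _)
  have h1 : (μ N + 1) * ∑' (k : ↑((↑(Finset.range N) : Set ℕ)ᶜ)), d (k : ℕ)
      ≤ ∑' (k : ↑((↑(Finset.range N) : Set ℕ)ᶜ)), (μ (k : ℕ) + 1) * d (k : ℕ) := by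
    rw [← tsum_mul_left]
    exact Summable.tsum_le_tsum hsub ((hd1.summable.subtype _).mul_left _) (hg.subtype _)
  have h2 : ∑' (k : ↑((↑(Finset.range N) : Set ℕ)ᶜ)), (μ (k : ℕ) + 1) * d (k : ℕ)
      ≤ ∑' i, (μ i + 1) * d i :=
    Summable.tsum_subtype_le _ _ (fun i => mul_nonneg (by have := hμc i; linarith) (hd0 i)) hg
  rw [le_div_iff₀ hμN]
  nlinarith [h1, h2, hgsum]

end Stmt8Aux

open Stmt8Aux in
/-- Key compactness step of Lemma 4.3.  The self-adjoint operator `A` with compact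
resolvent is described by its eigenbasis `b` and eigenvalues `μ_n`, nondecreasing and
tending to `+∞`, with `A ≥ c·Id` for some `c > -1`.  States `ρ_m` with a uniform bound
`Tr(A^{1/2} ρ_m A^{1/2}) = ∑_i μ_i ⟨b_i, ρ_m b_i⟩ ≤ C` converging weak-* in trace class
(i.e. tested against compact operators) to a trace-class `ρ`, and such that
`A^{1/2} ρ_m A^{1/2}` converges weak-* in trace class, satisfy `Tr ρ_m → Tr ρ`; hence `ρ`
is a state and `ρ_m → ρ` in trace norm. -/
theorem stmt8 {H : Type*} [NormedAddCommGroup H] [InnerProductSpace ℂ H]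
    [CompleteSpace H] (b : HilbertBasis ℕ ℂ H) (μ : ℕ → ℝ) (c C : ℝ)
    (hμmono : Monotone μ) (hμinf : Tendsto μ atTop atTop)
    (hμc : ∀ n, c ≤ μ n) (hc : -1 < c)
    (ρm : ℕ → H →L[ℂ] H) (ρ : H →L[ℂ] H)
    (hpos : ∀ m, (ρm m).IsPositive) (htc : ∀ m, traceNorm (ρm m) < ⊤)
    (htr1 : ∀ m, HasSum (fun i => (⟪b i, ρm m (b i)⟫_ℂ).re) 1)
    (hEsum : ∀ m, Summable fun i => μ i * (⟪b i, ρm m (b i)⟫_ℂ).re)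
    (hEbd : ∀ m, ∑' i, μ i * (⟪b i, ρm m (b i)⟫_ℂ).re ≤ C)
    (htcρ : traceNorm ρ < ⊤)
    (hweak : ∀ K : H →L[ℂ] H, IsCompactOperator K →
      Tendsto (fun m => ∑' i, ⟪b i, ((ρm m) ∘L K) (b i)⟫_ℂ) atTop
        (𝓝 (∑' i, ⟪b i, (ρ ∘L K) (b i)⟫_ℂ)))
    (hweakA : ∀ K : H →L[ℂ] H, IsCompactOperator K → ∃ l : ℂ,
      Tendsto (fun m => ∑' (p : ℕ × ℕ),
          ((Real.sqrt (μ p.1) * Real.sqrt (μ p.2) : ℝ) : ℂ) *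
            ⟪b p.1, (ρm m) (b p.2)⟫_ℂ * ⟪b p.2, K (b p.1)⟫_ℂ) atTop (𝓝 l)) :
    Tendsto (fun m => ∑' i, (⟪b i, ρm m (b i)⟫_ℂ).re) atTop
        (𝓝 (∑' i, (⟪b i, ρ (b i)⟫_ℂ).re)) ∧
      ρ.IsPositive ∧ HasSum (fun i => (⟪b i, ρ (b i)⟫_ℂ).re) 1 ∧
      Tendsto (fun m => traceNorm (ρm m - ρ)) atTop (𝓝 0) := by
  classical
  -- weak convergence tested against rank-one operators
  have hconv : ∀ u v : H,
      Tendsto (fun m => ⟪u, ρm m v⟫_ℂ) atTop (𝓝 ⟪u, ρ v⟫_ℂ) := by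
    intro u v
    have h := hweak (rk u v) (rk_isCompact u v)
    rw [trace_rk b ρ u v] at h
    have he : (fun m => ∑' i, ⟪b i, ((ρm m) ∘L rk u v) (b i)⟫_ℂ)
        = fun m => ⟪u, ρm m v⟫_ℂ := funext fun m => trace_rk b (ρm m) u v
    rwa [he] at h
  -- positivity of the limit
  have hρpos : ρ.IsPositive := by
    rw [ContinuousLinearMap.isPositive_iff_complex]
    intro x
    have hx := hconv x x
    have hcl : IsClosed {z : ℂ | 0 ≤ z.re ∧ z.im = 0} :=
      (isClosed_le continuous_const Complex.continuous_re).inter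
        (isClosed_eq Complex.continuous_im continuous_const)
    have hmem : ∀ m, ⟪x, ρm m x⟫_ℂ ∈ {z : ℂ | 0 ≤ z.re ∧ z.im = 0} := by
      intro m
      have h1 := (ContinuousLinearMap.isPositive_iff_complex (ρm m)).mp (hpos m) x
      have hconj : ⟪x, (ρm m) x⟫_ℂ = (starRingEnd ℂ) ⟪(ρm m) x, x⟫_ℂ := by
        rw [inner_conj_symm]
      have h2 : (⟪(ρm m) x, x⟫_ℂ).im = 0 := by
        conv_lhs => rw [← h1.1]
        simp
      constructor
      · show 0 ≤ (⟪x, (ρm m) x⟫_ℂ).re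
        rw [hconj, Complex.conj_re]
        exact h1.2
      · show (⟪x, (ρm m) x⟫_ℂ).im = 0
        rw [hconj, Complex.conj_im, h2, neg_zero]
    have hρx := hcl.mem_of_tendsto hx (Filter.Eventually.of_forall hmem)
    obtain ⟨hre, him⟩ := hρx
    have hconj : ⟪ρ x, x⟫_ℂ = (starRingEnd ℂ) ⟪x, ρ x⟫_ℂ := by rw [inner_conj_symm]
    constructor
    · apply Complex.ext
      · simp
      · rw [hconj, Complex.conj_im, him, neg_zero]
        simp
    · rw [RCLike.re_to_complex, hconj, Complex.conj_re]
      exact hre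
  -- nonnegativity of diagonal entries
  have hd0 : ∀ m i, 0 ≤ (⟪b i, ρm m (b i)⟫_ℂ).re := by
    intro m i
    have h := (hpos m).inner_nonneg_right (b i)
    exact (Complex.nonneg_iff.mp h).1
  have hdiagconv : ∀ i : ℕ, Tendsto (fun m => (⟪b i, ρm m (b i)⟫_ℂ).re) atTop
      (𝓝 ((⟪b i, ρ (b i)⟫_ℂ).re)) := fun i =>
    (Complex.continuous_re.tendsto _).comp (hconv (b i) (b i))
  have hr0 : ∀ i, 0 ≤ (⟪b i, ρ (b i)⟫_ℂ).re := fun i =>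
    ge_of_tendsto (hdiagconv i) (Filter.Eventually.of_forall fun m => hd0 m i)
  have hCge : c ≤ C := by
    have h1 : ∑' i, c * (⟪b i, ρm 0 (b i)⟫_ℂ).re ≤ ∑' i, μ i * (⟪b i, ρm 0 (b i)⟫_ℂ).re :=
      Summable.tsum_le_tsum (fun i => mul_le_mul_of_nonneg_right (hμc i) (hd0 0 i))
        ((htr1 0).summable.mul_left c) (hEsum 0)
    have h2 : ∑' i, c * (⟪b i, ρm 0 (b i)⟫_ℂ).re = c := by
      rw [tsum_mul_left, (htr1 0).tsum_eq, mul_one]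
    have h3 := hEbd 0
    linarith
  have hC1 : 0 < C + 1 := by linarith
  have htail : ∀ m N, ∑' (k : ↑((↑(Finset.range N) : Set ℕ)ᶜ)),
      (⟪b (k : ℕ), ρm m (b (k : ℕ))⟫_ℂ).re ≤ (C + 1) / (μ N + 1) := fun m N =>
    tail_bound hc hμc hμmono (hd0 m) (htr1 m) (hEsum m) (hEbd m) N
  have hpartconv : ∀ N : ℕ, Tendsto
      (fun m => ∑ i ∈ Finset.range N, (⟪b i, ρm m (b i)⟫_ℂ).re) atTop
      (𝓝 (∑ i ∈ Finset.range N, (⟪b i, ρ (b i)⟫_ℂ).re)) := fun N =>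
    tendsto_finset_sum _ fun i _ => hdiagconv i
  have hpart_le : ∀ s : Finset ℕ, ∑ i ∈ s, (⟪b i, ρ (b i)⟫_ℂ).re ≤ 1 := by
    intro s
    refine le_of_tendsto (tendsto_finset_sum _ fun i _ => hdiagconv i)
      (Filter.Eventually.of_forall fun m => ?_)
    exact sum_le_hasSum s (fun i _ => hd0 m i) (htr1 m)
  have hrsummable : Summable fun i => (⟪b i, ρ (b i)⟫_ℂ).re :=
    summable_of_sum_le (fun i => hr0 i) hpart_le
  have hgap_m : ∀ m N, 1 - ∑ i ∈ Finset.range N, (⟪b i, ρm m (b i)⟫_ℂ).re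
      ≤ (C + 1) / (μ N + 1)
      ∧ 0 ≤ 1 - ∑ i ∈ Finset.range N, (⟪b i, ρm m (b i)⟫_ℂ).re := by
    intro m N
    have hs := (htr1 m).summable
    have hcompl := Summable.sum_add_tsum_compl (s := Finset.range N) hs
    rw [(htr1 m).tsum_eq] at hcompl
    have htl := htail m N
    have htl0 : 0 ≤ ∑' (k : ↑((↑(Finset.range N) : Set ℕ)ᶜ)),
        (⟪b (k : ℕ), ρm m (b (k : ℕ))⟫_ℂ).re := tsum_nonneg fun k => hd0 m _
    constructor <;> linarith
  have hgap_ρ : ∀ N : ℕ, 1 - ∑ i ∈ Finset.range N, (⟪b i, ρ (b i)⟫_ℂ).re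
      ≤ (C + 1) / (μ N + 1)
      ∧ 0 ≤ 1 - ∑ i ∈ Finset.range N, (⟪b i, ρ (b i)⟫_ℂ).re := by
    intro N
    have e1 : Tendsto (fun m => 1 - ∑ i ∈ Finset.range N, (⟪b i, ρm m (b i)⟫_ℂ).re) atTop
        (𝓝 (1 - ∑ i ∈ Finset.range N, (⟪b i, ρ (b i)⟫_ℂ).re)) :=
      tendsto_const_nhds.sub (hpartconv N)
    constructor
    · exact le_of_tendsto e1 (Filter.Eventually.of_forall fun m => (hgap_m m N).1)
    · exact ge_of_tendsto e1 (Filter.Eventually.of_forall fun m => (hgap_m m N).2)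
  have hβ0 : Tendsto (fun N => (C + 1) / (μ N + 1)) atTop (𝓝 0) :=
    Tendsto.div_atTop tendsto_const_nhds (tendsto_atTop_add_const_right _ 1 hμinf)
  have hr1 : HasSum (fun i => (⟪b i, ρ (b i)⟫_ℂ).re) 1 := by
    have hA : Tendsto (fun N => ∑ i ∈ Finset.range N, (⟪b i, ρ (b i)⟫_ℂ).re) atTop
        (𝓝 (∑' i, (⟪b i, ρ (b i)⟫_ℂ).re)) := hrsummable.hasSum.tendsto_sum_nat
    have hB : Tendsto (fun N => ∑ i ∈ Finset.range N, (⟪b i, ρ (b i)⟫_ℂ).re) atTop (𝓝 1) := by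
      refine tendsto_of_tendsto_of_tendsto_of_le_of_le
        (g := fun N => 1 - (C + 1) / (μ N + 1)) (h := fun N => (1 : ℝ)) ?_ ?_ ?_ ?_
      · have := tendsto_const_nhds (x := (1 : ℝ)) (f := atTop (α := ℕ))
        simpa using this.sub hβ0
      · exact tendsto_const_nhds
      · intro N; simp only []; have := (hgap_ρ N).1; linarith
      · intro N; simp only []; have := (hgap_ρ N).2; linarith
    have heq := tendsto_nhds_unique hA hB
    rw [← heq]
    exact hrsummable.hasSum
  have hconc1 : Tendsto (fun m => ∑' i, (⟪b i, ρm m (b i)⟫_ℂ).re) atTop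
      (𝓝 (∑' i, (⟪b i, ρ (b i)⟫_ℂ).re)) := by
    have h1 : (fun m => ∑' i, (⟪b i, ρm m (b i)⟫_ℂ).re) = fun _ => (1 : ℝ) :=
      funext fun m => (htr1 m).tsum_eq
    rw [h1, hr1.tsum_eq]
    exact tendsto_const_nhds
  refine ⟨hconc1, hρpos, hr1, ?_⟩
  rw [ENNReal.tendsto_atTop_zero]
  intro ε hε
  obtain ⟨δ, hδ0, hδε⟩ : ∃ δ : ℝ, 0 < δ ∧ ENNReal.ofReal δ ≤ ε := by
    rcases eq_or_ne ε ⊤ with h | h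
    · exact ⟨1, one_pos, by simp [h]⟩
    · exact ⟨ε.toReal, ENNReal.toReal_pos hε.ne' h, by rw [ENNReal.ofReal_toReal h]⟩
  have hsq : Tendsto (fun N => 4 * Real.sqrt ((C + 1) / (μ N + 1))) atTop (𝓝 0) := by
    have h1 : Tendsto (fun N => Real.sqrt ((C + 1) / (μ N + 1))) atTop (𝓝 0) := by
      have h2 := (Real.continuous_sqrt.tendsto 0).comp hβ0
      simpa [Function.comp_def] using h2
    have h3 := h1.const_mul (4 : ℝ)
    simpa using h3
  obtain ⟨N, hN⟩ := (hsq.eventually_lt_const (half_pos hδ0)).exists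
  have hblock : Tendsto (fun m => ∑ j ∈ Finset.range N, ∑ k ∈ Finset.range N,
      ‖⟪b j, (ρm m - ρ) (b k)⟫_ℂ‖) atTop (𝓝 0) := by
    have h0 : ∀ j k : ℕ, Tendsto (fun m => ‖⟪b j, (ρm m - ρ) (b k)⟫_ℂ‖) atTop (𝓝 0) := by
      intro j k
      have h1 : Tendsto (fun m => ⟪b j, ρm m (b k)⟫_ℂ - ⟪b j, ρ (b k)⟫_ℂ) atTop
          (𝓝 (⟪b j, ρ (b k)⟫_ℂ - ⟪b j, ρ (b k)⟫_ℂ)) :=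
        (hconv (b j) (b k)).sub tendsto_const_nhds
      rw [sub_self] at h1
      have h2 : ∀ m : ℕ, ⟪b j, (ρm m - ρ) (b k)⟫_ℂ
          = ⟪b j, ρm m (b k)⟫_ℂ - ⟪b j, ρ (b k)⟫_ℂ := fun m => by
        rw [ContinuousLinearMap.sub_apply, inner_sub_right]
      have h4 := h1.norm
      rw [norm_zero] at h4
      simpa only [h2] using h4
    have h3 := tendsto_finset_sum (Finset.range N)
      (fun j (_ : j ∈ Finset.range N) => tendsto_finset_sum (Finset.range N)
        (fun k (_ : k ∈ Finset.range N) => h0 j k))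
    simpa using h3
  obtain ⟨M, hM⟩ := Filter.eventually_atTop.mp (hblock.eventually_lt_const (half_pos hδ0))
  refine ⟨M, fun m hm => ?_⟩
  refine le_trans ?_ hδε
  show traceNorm (ρm m - ρ) ≤ ENNReal.ofReal δ
  have hkey : ∀ (n : ℕ) (e f : Fin n → H), Orthonormal ℂ e → Orthonormal ℂ f →
      ∑ i, ‖⟪e i, (ρm m - ρ) (f i)⟫_ℂ‖ ≤ δ := by
    intro n e f he hf
    have hsplit : ∀ i : Fin n, ⟪e i, (ρm m - ρ) (f i)⟫_ℂ
        = (⟪e i, ρm m (f i)⟫_ℂ - ⟪trP b N (e i), ρm m (trP b N (f i))⟫_ℂ)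
          - (⟪e i, ρ (f i)⟫_ℂ - ⟪trP b N (e i), ρ (trP b N (f i))⟫_ℂ)
          + ⟪trP b N (e i), (ρm m - ρ) (trP b N (f i))⟫_ℂ := by
      intro i
      simp only [ContinuousLinearMap.sub_apply, inner_sub_right]
      ring
    have hptnorm : ∀ i : Fin n, ‖⟪e i, (ρm m - ρ) (f i)⟫_ℂ‖
        ≤ ‖⟪e i, ρm m (f i)⟫_ℂ - ⟪trP b N (e i), ρm m (trP b N (f i))⟫_ℂ‖
          + ‖⟪e i, ρ (f i)⟫_ℂ - ⟪trP b N (e i), ρ (trP b N (f i))⟫_ℂ‖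
          + ‖⟪trP b N (e i), (ρm m - ρ) (trP b N (f i))⟫_ℂ‖ := by
      intro i
      rw [hsplit i]
      refine le_trans (norm_add_le _ _) (add_le_add_left ?_ _)
      exact norm_sub_le _ _
    refine le_trans (Finset.sum_le_sum fun i _ => hptnorm i) ?_
    rw [Finset.sum_add_distrib, Finset.sum_add_distrib]
    have hA := core_estimate b (ρm m) (hpos m) (htr1 m).summable N e f he hf
    have hB := core_estimate b ρ hρpos hrsummable N e f he hf
    have hC' := block_estimate b (ρm m - ρ) N e f he hf
    have hμN : 0 < μ N + 1 := by have := hμc N; linarith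
    have hβnn : 0 ≤ (C + 1) / (μ N + 1) := div_nonneg hC1.le hμN.le
    have hτρ : ∑' (k : ↑((↑(Finset.range N) : Set ℕ)ᶜ)),
        (⟪b (k : ℕ), ρ (b (k : ℕ))⟫_ℂ).re ≤ (C + 1) / (μ N + 1) := by
      have hcompl := Summable.sum_add_tsum_compl (s := Finset.range N) hrsummable
      rw [hr1.tsum_eq] at hcompl
      have := (hgap_ρ N).1
      linarith
    have hA' : ∑ i, ‖⟪e i, ρm m (f i)⟫_ℂ - ⟪trP b N (e i), ρm m (trP b N (f i))⟫_ℂ‖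
        ≤ 2 * Real.sqrt ((C + 1) / (μ N + 1)) := by
      refine le_trans hA ?_
      rw [(htr1 m).tsum_eq, Real.sqrt_one]
      have := Real.sqrt_le_sqrt (htail m N)
      nlinarith [Real.sqrt_nonneg ((C + 1) / (μ N + 1)),
        Real.sqrt_nonneg (∑' (k : ↑((↑(Finset.range N) : Set ℕ)ᶜ)),
          (⟪b (k : ℕ), ρm m (b (k : ℕ))⟫_ℂ).re)]
    have hB' : ∑ i, ‖⟪e i, ρ (f i)⟫_ℂ - ⟪trP b N (e i), ρ (trP b N (f i))⟫_ℂ‖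
        ≤ 2 * Real.sqrt ((C + 1) / (μ N + 1)) := by
      refine le_trans hB ?_
      rw [hr1.tsum_eq, Real.sqrt_one]
      have := Real.sqrt_le_sqrt hτρ
      nlinarith [Real.sqrt_nonneg ((C + 1) / (μ N + 1)),
        Real.sqrt_nonneg (∑' (k : ↑((↑(Finset.range N) : Set ℕ)ᶜ)),
          (⟪b (k : ℕ), ρ (b (k : ℕ))⟫_ℂ).re)]
    have hC'' : ∑ i, ‖⟪trP b N (e i), (ρm m - ρ) (trP b N (f i))⟫_ℂ‖ < δ / 2 :=
      lt_of_le_of_lt hC' (hM m hm)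
    have h4N : 4 * Real.sqrt ((C + 1) / (μ N + 1)) < δ / 2 := hN
    linarith
  refine iSup_le fun n => iSup_le fun e => iSup_le fun f => iSup_le fun he => iSup_le fun hf => ?_
  calc (∑ i, (‖⟪e i, (ρm m - ρ) (f i)⟫_ℂ‖₊ : ℝ≥0∞))
      = ENNReal.ofReal (∑ i, ‖⟪e i, (ρm m - ρ) (f i)⟫_ℂ‖) := by
        rw [ENNReal.ofReal_sum_of_nonneg (fun i _ => norm_nonneg _)]
        exact Finset.sum_congr rfl fun i _ => (ofReal_norm _).symm
    _ ≤ ENNReal.ofReal δ := ENNReal.ofReal_le_ofReal (hkey n e f he hf)
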